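/- arXiv:1011.4441 — 4 statements merged into one kernel-verified Lean document; each statement's English description precedes it below -/
import Mathlib

section
/- Let α, β, γ be complex numbers and ε ∈ {1, -1}. Then λ is an eigenvalue of the matrix L₁ = [[0, α, β], [γ, 0, 0], [0, β, εα]] if and only if ελ is an eigenvalue of the matrix L₂ = [[0, α, β], [γ, 0, 0], [0, εβ, α]]. -/
open Matrix

theorem eigenvalue_L1_iff_L2 (α β γ ε lam : ℂ) (hε : ε = 1 ∨ ε = -1) :
    (∃ v : Fin 3 → ℂ, v ≠ 0 ∧
        (Matrix.of ![![0, α, β], ![γ, 0, 0], ![0, β, ε * α]]).mulVec v = lam • v) ↔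
    (∃ v : Fin 3 → ℂ, v ≠ 0 ∧
        (Matrix.of ![![0, α, β], ![γ, 0, 0], ![0, ε * β, α]]).mulVec v = (ε * lam) • v) := by
  have hε2 : ε * ε = 1 := by rcases hε with h | h <;> simp [h]
  have hε0 : ε ≠ 0 := by rcases hε with h | h <;> simp [h]
  constructor
  · rintro ⟨v, hv0, hv⟩
    refine ⟨![v 0, ε * v 1, ε * v 2], ?_, ?_⟩
    · intro h
      apply hv0
      have h0 := congrFun h 0
      have h1 := congrFun h 1
      have h2 := congrFun h 2
      simp [hε0] at h0 h1 h2
      funext i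
      fin_cases i <;> simp [h0, h1, h2]
    · have h0 := congrFun hv 0
      have h1 := congrFun hv 1
      have h2 := congrFun hv 2
      simp [Matrix.mulVec, dotProduct, Fin.sum_univ_three] at h0 h1 h2
      funext i
      fin_cases i <;>
        simp [Matrix.mulVec, dotProduct, Fin.sum_univ_three]
      · linear_combination ε * h0
      · linear_combination h1 - lam * v 1 * hε2
      · linear_combination ε * ε * h2 - ε * α * v 2 * hε2
  · rintro ⟨v, hv0, hv⟩
    refine ⟨![v 0, ε * v 1, ε * v 2], ?_, ?_⟩
    · intro h
      apply hv0
      have h0 := congrFun h 0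
      have h1 := congrFun h 1
      have h2 := congrFun h 2
      simp [hε0] at h0 h1 h2
      funext i
      fin_cases i <;> simp [h0, h1, h2]
    · have h0 := congrFun hv 0
      have h1 := congrFun hv 1
      have h2 := congrFun hv 2
      simp [Matrix.mulVec, dotProduct, Fin.sum_univ_three] at h0 h1 h2
      funext i
      fin_cases i <;>
        simp [Matrix.mulVec, dotProduct, Fin.sum_univ_three]
      · linear_combination ε * h0 + lam * v 0 * hε2
      · linear_combination h1
      · linear_combination h2 + α * v 2 * hε2
end

section
/- Let α, β, γ be complex numbers, ε ∈ {1, -1}, L₁ = [[0, α, β], [γ, 0, 0], [0, β, εα]] and L₂ = [[0, α, β], [γ, 0, 0], [0, εβ, α]]. Then for all natural numbers n, trace(L₁ⁿ) = εⁿ · trace(L₂ⁿ). -/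
open Matrix

theorem trace_pow_L1_eq_sign_mul_trace_pow_L2 (α β γ ε : ℂ) (hε : ε = 1 ∨ ε = -1) (n : ℕ) :
    Matrix.trace ((Matrix.of ![![0, α, β], ![γ, 0, 0], ![0, β, ε * α]]) ^ n) =
      ε ^ n * Matrix.trace ((Matrix.of ![![0, α, β], ![γ, 0, 0], ![0, ε * β, α]]) ^ n) := by
  have hε2 : ε ^ 2 = 1 := by rcases hε with h | h <;> subst h <;> ring
  set D : Matrix (Fin 3) (Fin 3) ℂ := Matrix.of ![![ε, 0, 0], ![0, 1, 0], ![0, 0, 1]] with hDdef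
  set L2 : Matrix (Fin 3) (Fin 3) ℂ := Matrix.of ![![0, α, β], ![γ, 0, 0], ![0, ε * β, α]]
    with hL2def
  have hDD : D * D = 1 := by
    ext i j
    fin_cases i <;> fin_cases j <;>
      simp [hDdef, Matrix.mul_apply, Fin.sum_univ_three, ← sq, hε2, Matrix.vecHead, Matrix.vecTail]
  have hM : Matrix.of ![![0, α, β], ![γ, 0, 0], ![0, β, ε * α]] = ε • (D * L2 * D) := by
    ext i j
    fin_cases i <;> fin_cases j <;>
      simp [hDdef, hL2def, Matrix.mul_apply, Fin.sum_univ_three] <;> ring_nf <;>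
      simp [hε2]
  have hpow : ∀ m : ℕ, (D * L2 * D) ^ m = D * L2 ^ m * D := by
    intro m
    induction m with
    | zero => simp [hDD]
    | succ k ih =>
      rw [pow_succ, ih, pow_succ]
      rw [show D * L2 ^ k * D * (D * L2 * D) = D * L2 ^ k * (D * D) * L2 * D by
        simp [Matrix.mul_assoc]]
      rw [hDD]
      simp [Matrix.mul_assoc]
  rw [hM, smul_pow, hpow]
  rw [Matrix.trace_smul, Matrix.trace_mul_cycle, hDD]
  simp
end

section
/- A positive integer k divides 24 if and only if for all integers a and d, a·d ≡ 1 (mod k) implies a ≡ d (mod k). -/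
/-- The key property, phrased in `ZMod n`. -/
def Qprop (n : ℕ) : Prop := ∀ a d : ZMod n, a * d = 1 → a = d

lemma qprop_units {n : ℕ} (h : Qprop n) (u : (ZMod n)ˣ) : u * u = 1 := by
  have h1 : (u : ZMod n) * (↑u⁻¹ : ZMod n) = 1 := by
    rw [← Units.val_mul, mul_inv_cancel, Units.val_one]
  have h2 : (u : ZMod n) = (↑u⁻¹ : ZMod n) := h _ _ h1
  have h3 : u = u⁻¹ := Units.ext h2
  calc u * u = u * u⁻¹ := by rw [← h3]
    _ = 1 := mul_inv_cancel u

lemma qprop_of_units {n : ℕ} (h : ∀ u : (ZMod n)ˣ, u * u = 1) : Qprop n := by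
  intro a d had
  have ha : IsUnit a := IsUnit.of_mul_eq_one d had
  obtain ⟨u, rfl⟩ := ha
  have hd : d = (↑u⁻¹ : ZMod n) := by
    have := Units.inv_eq_of_mul_eq_one_right (α := ZMod n) had
    rw [← this]
  rw [hd]
  have h3 : u = u⁻¹ := by
    have := h u
    rw [← mul_inv_cancel u] at this
    exact mul_left_cancel this ▸ (mul_left_cancel (a := u) (by rw [this, mul_inv_cancel]))
  rw [← h3]

lemma qprop_dvd {m n : ℕ} (hm : NeZero n) (hdvd : m ∣ n) (h : Qprop n) : Qprop m := by
  apply qprop_of_units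
  intro v
  obtain ⟨u, rfl⟩ := ZMod.unitsMap_surjective hdvd v
  rw [← map_mul, qprop_units h u, map_one]

theorem divides_24_iff_mul_inverse_congruent (k : ℕ) (hk : 0 < k) :
    k ∣ 24 ↔ ∀ a d : ℤ, a * d ≡ 1 [ZMOD (k : ℤ)] → a ≡ d [ZMOD (k : ℤ)] := by
  have hkne : k ≠ 0 := hk.ne'
  have key : (∀ a d : ℤ, a * d ≡ 1 [ZMOD (k : ℤ)] → a ≡ d [ZMOD (k : ℤ)]) ↔ Qprop k := by
    constructor
    · intro h a d had
      obtain ⟨a', rfl⟩ := ZMod.intCast_surjective (n := k) a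
      obtain ⟨d', rfl⟩ := ZMod.intCast_surjective (n := k) d
      rw [ZMod.intCast_eq_intCast_iff]
      apply h
      rw [← ZMod.intCast_eq_intCast_iff]
      push_cast
      exact had
    · intro h a d had
      rw [← ZMod.intCast_eq_intCast_iff] at had ⊢
      push_cast at had
      exact h _ _ had
  rw [key]
  constructor
  · intro h
    have hle : k ≤ 24 := Nat.le_of_dvd (by norm_num) h
    interval_cases k <;> revert h <;> unfold Qprop <;> decide
  · intro h
    haveI : NeZero k := ⟨hkne⟩
    -- 16 does not divide k
    have h16 : ¬ (16 ∣ k) := by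
      intro hd
      have h' : Qprop 16 := qprop_dvd ‹NeZero k› hd h
      unfold Qprop at h'
      revert h'
      decide
    have h9 : ¬ (9 ∣ k) := by
      intro hd
      have h' : Qprop 9 := qprop_dvd ‹NeZero k› hd h
      unfold Qprop at h'
      revert h'
      decide
    have hp : ∀ p : ℕ, p.Prime → 5 ≤ p → ¬ (p ∣ k) := by
      intro p hp hp5 hd
      have hq : Qprop p := qprop_dvd ‹NeZero k› hd h
      haveI : Fact p.Prime := ⟨hp⟩
      have h2 : (2 : ZMod p) ≠ 0 := by
        intro h0
        have h0' : ((2 : ℕ) : ZMod p) = 0 := by push_cast; exact h0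
        have hdvd2 : p ∣ 2 := (ZMod.natCast_eq_zero_iff 2 p).mp h0'
        have := Nat.le_of_dvd (by norm_num) hdvd2
        omega
      have heq : (2 : ZMod p) = (2 : ZMod p)⁻¹ := hq _ _ (mul_inv_cancel₀ h2)
      have h4 : (2 : ZMod p) * 2 = 1 := by
        nth_rewrite 1 [heq]
        rw [inv_mul_cancel₀ h2]
      have h3 : ((3 : ℕ) : ZMod p) = 0 := by
        push_cast
        linear_combination h4
      rw [ZMod.natCast_eq_zero_iff] at h3
      have := Nat.le_of_dvd (by norm_num) h3
      omega
    -- conclude k ∣ 24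
    rw [← Nat.factorization_le_iff_dvd hkne (by norm_num)]
    intro p
    by_cases hpp : p.Prime
    · rcases eq_or_ne p 2 with rfl | hne2
      · have : k.factorization 2 ≤ 3 := by
          by_contra hgt
          exact h16 (by
            have : (2 : ℕ) ^ 4 ∣ k :=
              (Nat.Prime.pow_dvd_iff_le_factorization Nat.prime_two hkne).mpr (by omega)
            simpa using this)
        have h24 : 3 ≤ (24 : ℕ).factorization 2 :=
          (Nat.Prime.pow_dvd_iff_le_factorization Nat.prime_two (by norm_num)).mp (by norm_num)
        omega
      rcases eq_or_ne p 3 with rfl | hne3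
      · have : k.factorization 3 ≤ 1 := by
          by_contra hgt
          exact h9 (by
            have : (3 : ℕ) ^ 2 ∣ k :=
              (Nat.Prime.pow_dvd_iff_le_factorization Nat.prime_three hkne).mpr (by omega)
            simpa using this)
        have h24 : 1 ≤ (24 : ℕ).factorization 3 :=
          (Nat.Prime.pow_dvd_iff_le_factorization Nat.prime_three (by norm_num)).mp (by norm_num)
        omega
      · have hp5 : 5 ≤ p := by
          have := hpp.two_le
          rcases Nat.lt_or_ge p 5 with hlt | hge
          · interval_cases p
            · exact absurd rfl hne2
            · exact absurd rfl hne3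
            · norm_num at hpp
          · exact hge
        have : k.factorization p = 0 := by
          rw [Nat.factorization_eq_zero_iff]
          right; left
          exact hp p hpp hp5
        omega
    · simp [Nat.factorization_eq_zero_of_not_prime _ hpp]
end

section
/- The index of Γ₀(N) in SL(2,ℤ) is the multiplicative function μ_N = N·∏_{p | N}(1 + 1/p), where the product runs over the prime divisors of N. -/
open Matrix CongruenceSubgroup
open scoped MatrixGroups

namespace Gamma0IndexAux



/-- Key arithmetic lemma: one can shift `x` by a multiple of `n` to make it coprime to `m`. -/
lemma exists_add_mul_coprime (x n m : ℕ) (hm : m ≠ 0) (h : Nat.Coprime (Nat.gcd x n) m) :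
    ∃ k : ℕ, Nat.Coprime (x + k * n) m := by
  let ps := m.primeFactors.filter (fun p ↦ ¬p ∣ x)
  use ps.prod id
  apply Nat.coprime_of_dvd
  intro p pp hp hpm
  by_cases hpx : p ∣ x
  · have h' := Nat.dvd_sub hp hpx
    rw [add_comm, Nat.add_sub_cancel] at h'
    rcases pp.dvd_mul.mp h' with h' | h'
    · have ⟨q, hq, hq'⟩ := (pp.prime.dvd_finset_prod_iff id).mp h'
      rw [Finset.mem_filter] at hq
      rw [(Nat.prime_dvd_prime_iff_eq pp (Nat.prime_of_mem_primeFactors hq.1)).mp hq'] at hpx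
      exact hq.2 hpx
    · have : p ∣ Nat.gcd x n := Nat.dvd_gcd hpx h'
      have : p ∣ Nat.gcd (Nat.gcd x n) m := Nat.dvd_gcd this hpm
      rw [h] at this
      exact pp.one_lt.ne' (Nat.dvd_one.mp this)
  · have pps : p ∈ ps := Finset.mem_filter.mpr ⟨Nat.mem_primeFactors.mpr ⟨pp, hpm, hm⟩, hpx⟩
    have h' := Nat.dvd_sub hp ((Finset.dvd_prod_of_mem id pps).mul_right n)
    rw [Nat.add_sub_cancel] at h'
    contradiction

/-- Any pair in `ZMod N` which is coprime (in the `IsCoprime` sense) lifts to the bottom row of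
an integral `SL(2, ℤ)` matrix. -/
lemma exists_SL2_row {N : ℕ} (hN : N ≠ 0) (v : Fin 2 → ZMod N) (h : IsCoprime (v 0) (v 1)) :
    ∃ γ : SL(2, ℤ), ((γ 1 0 : ℤ) : ZMod N) = v 0 ∧ ((γ 1 1 : ℤ) : ZMod N) = v 1 := by
  haveI : NeZero N := ⟨hN⟩
  set m : ℕ := if (v 0).val = 0 then N else (v 0).val with hm_def
  have hm : m ≠ 0 := by
    rw [hm_def]; split
    · exact hN
    · assumption
  have hmv : ((m : ℕ) : ZMod N) = v 0 := by
    rw [hm_def]; split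
    · rename_i h0
      rw [ZMod.val_eq_zero] at h0
      simp [h0]
    · exact (ZMod.natCast_val (v 0)).trans (ZMod.cast_id _ _)
  set x : ℕ := (v 1).val with hx_def
  have hxv : ((x : ℕ) : ZMod N) = v 1 := (ZMod.natCast_val (v 1)).trans (ZMod.cast_id _ _)
  -- gcd condition
  have hgcd : Nat.Coprime (Nat.gcd x N) m := by
    obtain ⟨a, b, hab⟩ := h
    have h1 : ((a.val * m + b.val * x : ℕ) : ZMod N) = ((1 : ℕ) : ZMod N) := by
      push_cast
      rw [hmv, hxv, (ZMod.natCast_val a).trans (ZMod.cast_id _ _),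
        (ZMod.natCast_val b).trans (ZMod.cast_id _ _), hab]
    have hmod : (1 : ℕ) ≡ (a.val * m + b.val * x : ℕ) [MOD N] :=
      ((ZMod.natCast_eq_natCast_iff _ _ _).mp h1).symm
    obtain ⟨t, ht⟩ := hmod.dvd
    set d : ℕ := Nat.gcd (Nat.gcd x N) m with hd_def
    have hdvd1 : (d : ℤ) ∣ 1 := by
      have hdx : (d : ℤ) ∣ (x : ℤ) := Int.natCast_dvd_natCast.mpr ((Nat.gcd_dvd_left _ m).trans (Nat.gcd_dvd_left x N))
      have hdN : (d : ℤ) ∣ (N : ℤ) := Int.natCast_dvd_natCast.mpr ((Nat.gcd_dvd_left _ m).trans (Nat.gcd_dvd_right x N))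
      have hdm : (d : ℤ) ∣ (m : ℤ) := Int.natCast_dvd_natCast.mpr (Nat.gcd_dvd_right _ m)
      have : (1 : ℤ) = (a.val : ℤ) * m + b.val * x - N * t := by
        push_cast at ht ⊢; linarith
      rw [this]
      exact dvd_sub (dvd_add (Dvd.dvd.mul_left hdm _) (Dvd.dvd.mul_left hdx _)) (Dvd.dvd.mul_right hdN _)
    exact Nat.dvd_one.mp (Int.ofNat_dvd.mp hdvd1)
  -- build the matrix
  obtain ⟨k, hk⟩ := exists_add_mul_coprime x N m hm hgcd
  have hcop : IsCoprime ((m : ℕ) : ℤ) ((x + k * N : ℕ) : ℤ) :=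
    Nat.isCoprime_iff_coprime.mpr (Nat.coprime_comm.mp hk)
  obtain ⟨p, q, hpq⟩ := hcop
  refine ⟨⟨!![q, -p; (m : ℤ), ((x + k * N : ℕ) : ℤ)], ?_⟩, ?_, ?_⟩
  · rw [Matrix.det_fin_two_of]
    linarith
  · show (((!![q, -p; (m : ℤ), ((x + k * N : ℕ) : ℤ)]) 1 0 : ℤ) : ZMod N) = v 0
    simp [hmv]
  · show (((!![q, -p; (m : ℤ), ((x + k * N : ℕ) : ℤ)]) 1 1 : ℤ) : ZMod N) = v 1
    push_cast
    simp [hxv]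


local notation "SLMOD(" N ")" =>
  @Matrix.SpecialLinearGroup.map (Fin 2) _ _ _ _ _ _ (Int.castRingHom (ZMod N))

lemma vecMul01 {R : Type*} [CommRing R] (M : Matrix (Fin 2) (Fin 2) R) :
    ![0, 1] ᵥ* M = ![M 1 0, M 1 1] := by
  funext j
  fin_cases j <;> simp [Matrix.vecMul, dotProduct, Fin.sum_univ_two]

/-- Type synonym for `Fin 2 → ZMod N`, carrying the right action of `SL(2, ℤ)` (made into a left
action by composing with inversion). -/
def Row (N : ℕ) := Fin 2 → ZMod N

instance (N : ℕ) : MulAction SL(2, ℤ) (Row N) where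
  smul γ v := (v : Fin 2 → ZMod N) ᵥ* ((SLMOD(N) γ⁻¹ : SL(2, ZMod N)) : Matrix (Fin 2) (Fin 2) (ZMod N))
  one_smul v := by
    show (v : Fin 2 → ZMod N) ᵥ* _ = v
    rw [inv_one, _root_.map_one]
    simp
    exact Matrix.vecMul_one _
  mul_smul γ δ v := by
    show (v : Fin 2 → ZMod N) ᵥ* _ = ((v : Fin 2 → ZMod N) ᵥ* _) ᵥ* _
    rw [_root_.mul_inv_rev, _root_.map_mul]
    simp [Matrix.vecMul_vecMul]
    exact (Matrix.vecMul_vecMul (v : Fin 2 → ZMod N) _ _).symm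

lemma smul_def {N : ℕ} (γ : SL(2, ℤ)) (v : Row N) :
    γ • v = (v : Fin 2 → ZMod N) ᵥ* ((SLMOD(N) γ⁻¹ : SL(2, ZMod N)) : Matrix (Fin 2) (Fin 2) (ZMod N)) := rfl

/-- The base point `![0, 1]`. -/
def v₀ (N : ℕ) : Row N := ![0, 1]

lemma smul_v₀ {N : ℕ} (γ : SL(2, ℤ)) :
    γ • v₀ N = ![((γ⁻¹ 1 0 : ℤ) : ZMod N), ((γ⁻¹ 1 1 : ℤ) : ZMod N)] := by
  rw [smul_def]
  show (![0,1] : Fin 2 → ZMod N) ᵥ* _ = _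
  rw [vecMul01]
  congr 1

lemma stabilizer_v₀ (N : ℕ) : MulAction.stabilizer SL(2, ℤ) (v₀ N) = Gamma1 N := by
  ext γ
  rw [MulAction.mem_stabilizer_iff]
  constructor
  · intro hγ
    -- from γ • v₀ = v₀ deduce γ⁻¹ bottom row ≡ (0,1), hence γ bottom row ≡ (0,1)
    rw [smul_v₀] at hγ
    have h0 : ((γ⁻¹ 1 0 : ℤ) : ZMod N) = 0 := by
      have := congrFun hγ 0
      simpa [v₀] using this
    have h1 : ((γ⁻¹ 1 1 : ℤ) : ZMod N) = 1 := by
      have := congrFun hγ 1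
      simpa [v₀] using this
    have hinv : γ⁻¹ ∈ Gamma1 N := by
      rw [Gamma1_mem]
      refine ⟨?_, h1, h0⟩
      -- top-left entry ≡ 1 from determinant
      have hdet : ((γ⁻¹ : SL(2,ℤ)) : Matrix (Fin 2) (Fin 2) ℤ).det = 1 := (γ⁻¹).2
      rw [Matrix.det_fin_two] at hdet
      have : ((γ⁻¹ 0 0 : ℤ) : ZMod N) * ((γ⁻¹ 1 1 : ℤ) : ZMod N)
          - ((γ⁻¹ 0 1 : ℤ) : ZMod N) * ((γ⁻¹ 1 0 : ℤ) : ZMod N) = 1 := by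
        exact_mod_cast congrArg (fun z : ℤ => (z : ZMod N)) hdet
      rw [h0, h1] at this
      simpa using this
    simpa using (Gamma1 N).inv_mem hinv
  · intro hγ
    have hinv : γ⁻¹ ∈ Gamma1 N := (Gamma1 N).inv_mem hγ
    rw [Gamma1_mem] at hinv
    rw [smul_v₀]
    funext j
    fin_cases j
    · simpa [v₀] using hinv.2.2
    · simpa [v₀] using hinv.2.1

lemma orbit_v₀ {N : ℕ} (hN : N ≠ 0) :
    MulAction.orbit SL(2, ℤ) (v₀ N) = {v : Row N | IsCoprime (v 0) (v 1)} := by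
  ext v
  constructor
  · rintro ⟨γ, rfl⟩
    show (γ • v₀ N) ∈ {v : Row N | IsCoprime (v 0) (v 1)}
    rw [smul_v₀]
    show IsCoprime (((γ⁻¹ 1 0 : ℤ) : ZMod N)) (((γ⁻¹ 1 1 : ℤ) : ZMod N))
    have hdet : ((γ⁻¹ : SL(2,ℤ)) : Matrix (Fin 2) (Fin 2) ℤ).det = 1 := (γ⁻¹).2
    rw [Matrix.det_fin_two] at hdet
    have h : ((γ⁻¹ 0 0 : ℤ) : ZMod N) * ((γ⁻¹ 1 1 : ℤ) : ZMod N)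
        - ((γ⁻¹ 0 1 : ℤ) : ZMod N) * ((γ⁻¹ 1 0 : ℤ) : ZMod N) = 1 := by
      exact_mod_cast congrArg (fun z : ℤ => (z : ZMod N)) hdet
    exact ⟨-((γ⁻¹ 0 1 : ℤ) : ZMod N), ((γ⁻¹ 0 0 : ℤ) : ZMod N), by linear_combination h⟩
  · intro hv
    obtain ⟨γ, hγ0, hγ1⟩ := exists_SL2_row hN (v : Fin 2 → ZMod N) hv
    refine ⟨γ⁻¹, ?_⟩
    show γ⁻¹ • v₀ N = v
    rw [smul_v₀, inv_inv]
    funext j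
    fin_cases j <;> simp [hγ0, hγ1]




/-- The homomorphism `Γ₀(N) → (ZMod N)ˣ` sending a matrix to its lower-right entry. -/
def unitMap (N : ℕ) : Gamma0 N →* (ZMod N)ˣ where
  toFun g :=
    { val := ((g.1 1 1 : ℤ) : ZMod N)
      inv := ((g.1 0 0 : ℤ) : ZMod N)
      val_inv := by
        have hdet : ((g.1 : SL(2,ℤ)) : Matrix (Fin 2) (Fin 2) ℤ).det = 1 := g.1.2
        rw [Matrix.det_fin_two] at hdet
        have h : ((g.1 0 0 : ℤ) : ZMod N) * ((g.1 1 1 : ℤ) : ZMod N)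
            - ((g.1 0 1 : ℤ) : ZMod N) * ((g.1 1 0 : ℤ) : ZMod N) = 1 := by
          exact_mod_cast congrArg (fun z : ℤ => (z : ZMod N)) hdet
        have hc : ((g.1 1 0 : ℤ) : ZMod N) = 0 := Gamma0_mem.mp g.2
        rw [hc] at h
        linear_combination h
      inv_val := by
        have hdet : ((g.1 : SL(2,ℤ)) : Matrix (Fin 2) (Fin 2) ℤ).det = 1 := g.1.2
        rw [Matrix.det_fin_two] at hdet
        have h : ((g.1 0 0 : ℤ) : ZMod N) * ((g.1 1 1 : ℤ) : ZMod N)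
            - ((g.1 0 1 : ℤ) : ZMod N) * ((g.1 1 0 : ℤ) : ZMod N) = 1 := by
          exact_mod_cast congrArg (fun z : ℤ => (z : ZMod N)) hdet
        have hc : ((g.1 1 0 : ℤ) : ZMod N) = 0 := Gamma0_mem.mp g.2
        rw [hc] at h
        linear_combination h }
  map_one' := by
    ext
    simp
  map_mul' x y := by
    ext
    show (((x.1 * y.1 : SL(2,ℤ)) 1 1 : ℤ) : ZMod N) = _
    have := (Matrix.two_mul_expl x.1.1 y.1.1).2.2.2
    simp only [Matrix.SpecialLinearGroup.coe_mul] at *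
    rw [this]
    push_cast
    rw [Gamma0_mem.mp x.2]
    simp

lemma unitMap_surjective {N : ℕ} (hN : N ≠ 0) : Function.Surjective (unitMap N) := by
  haveI : NeZero N := ⟨hN⟩
  intro u
  have hcop : IsCoprime ((N : ZMod N)) ((u : ZMod N)) := by
    have : (N : ZMod N) = 0 := by simp
    rw [this]
    exact (isCoprime_zero_left).mpr u.isUnit
  obtain ⟨γ, hγ0, hγ1⟩ := exists_SL2_row hN ![(N : ZMod N), (u : ZMod N)] (by simpa using hcop)
  have hγ0' : ((γ 1 0 : ℤ) : ZMod N) = 0 := by simpa using hγ0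
  have hγ1' : ((γ 1 1 : ℤ) : ZMod N) = u := by simpa using hγ1
  have hγΓ : γ ∈ Gamma0 N := by
    rw [Gamma0_mem, hγ0']
  refine ⟨⟨γ, hγΓ⟩, ?_⟩
  ext
  exact hγ1'

lemma ker_unitMap (N : ℕ) : (unitMap N).ker = (Gamma1 N).subgroupOf (Gamma0 N) := by
  ext g
  rw [MonoidHom.mem_ker, Subgroup.mem_subgroupOf, Gamma1_mem, Units.ext_iff]
  show (((g.1 1 1 : ℤ) : ZMod N) = 1) ↔ _
  constructor
  · intro hd
    have hc : ((g.1 1 0 : ℤ) : ZMod N) = 0 := Gamma0_mem.mp g.2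
    have hdet : ((g.1 : SL(2,ℤ)) : Matrix (Fin 2) (Fin 2) ℤ).det = 1 := g.1.2
    rw [Matrix.det_fin_two] at hdet
    have h : ((g.1 0 0 : ℤ) : ZMod N) * ((g.1 1 1 : ℤ) : ZMod N)
        - ((g.1 0 1 : ℤ) : ZMod N) * ((g.1 1 0 : ℤ) : ZMod N) = 1 := by
      exact_mod_cast congrArg (fun z : ℤ => (z : ZMod N)) hdet
    rw [hc, hd] at h
    refine ⟨by simpa using h, hd, hc⟩
  · exact fun h => h.2.1

lemma relindex_Gamma1_Gamma0 {N : ℕ} (hN : N ≠ 0) :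
    (Gamma1 N).relIndex (Gamma0 N) = Nat.totient N := by
  haveI : NeZero N := ⟨hN⟩
  rw [Subgroup.relIndex, ← ker_unitMap, Subgroup.index_ker,
    MonoidHom.range_eq_top.mpr (unitMap_surjective hN), Subgroup.card_top,
    Nat.card_eq_fintype_card, ZMod.card_units_eq_totient]



/-- The number of coprime pairs in `ZMod n`. -/
noncomputable def cpairs (n : ℕ) : ℕ := Nat.card {v : Fin 2 → ZMod n | IsCoprime (v 0) (v 1)}

lemma isUnit_isCoprime_left {R : Type*} [CommRing R] {x : R} (h : IsUnit x) (y : R) :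
    IsCoprime x y := by
  obtain ⟨u, rfl⟩ := h
  exact ⟨(u⁻¹ : Rˣ), 0, by simp⟩

lemma cpairs_one : cpairs 1 = 1 := by
  haveI : Unique {v : Fin 2 → ZMod 1 | IsCoprime (v 0) (v 1)} :=
    { default := ⟨fun _ => 0, isUnit_isCoprime_left (isUnit_of_subsingleton _) _⟩
      uniq := fun v => Subtype.ext (Subsingleton.elim _ _) }
  exact Nat.card_unique

lemma isCoprime_prod_iff {R S : Type*} [CommRing R] [CommRing S] (x y : R × S) :
    IsCoprime x y ↔ IsCoprime x.1 y.1 ∧ IsCoprime x.2 y.2 := by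
  constructor
  · intro h
    exact ⟨h.map (RingHom.fst R S), h.map (RingHom.snd R S)⟩
  · rintro ⟨⟨a1, b1, h1⟩, ⟨a2, b2, h2⟩⟩
    exact ⟨(a1, a2), (b1, b2), Prod.ext (by simpa using h1) (by simpa using h2)⟩

lemma isCoprime_ringEquiv_iff {R S : Type*} [CommRing R] [CommRing S] (e : R ≃+* S) (x y : R) :
    IsCoprime (e x) (e y) ↔ IsCoprime x y := by
  constructor
  · intro h
    simpa using h.map (e.symm : S →+* R)
  · exact fun h => h.map (e : R →+* S)

lemma cpairs_mul {m n : ℕ} (h : Nat.Coprime m n) : cpairs (m * n) = cpairs m * cpairs n := by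
  let e := ZMod.chineseRemainder h
  have key : ∀ v : Fin 2 → ZMod (m * n), IsCoprime (v 0) (v 1) ↔
      (IsCoprime ((e (v 0)).1) ((e (v 1)).1) ∧ IsCoprime ((e (v 0)).2) ((e (v 1)).2)) := by
    intro v
    rw [← isCoprime_prod_iff, isCoprime_ringEquiv_iff]
  have E : {v : Fin 2 → ZMod (m * n) | IsCoprime (v 0) (v 1)} ≃
      {v : Fin 2 → ZMod m | IsCoprime (v 0) (v 1)} × {v : Fin 2 → ZMod n | IsCoprime (v 0) (v 1)} :=
    { toFun := fun v => (⟨fun i => (e (v.1 i)).1, ((key v.1).mp v.2).1⟩,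
        ⟨fun i => (e (v.1 i)).2, ((key v.1).mp v.2).2⟩)
      invFun := fun w => ⟨fun i => e.symm (w.1.1 i, w.2.1 i),
        (key (fun i => e.symm (w.1.1 i, w.2.1 i))).mpr
          ⟨by simp only [RingEquiv.apply_symm_apply]; exact w.1.2, by simp only [RingEquiv.apply_symm_apply]; exact w.2.2⟩⟩
      left_inv := fun v => Subtype.ext (by funext i; simp)
      right_inv := fun w => by
        refine Prod.ext (Subtype.ext ?_) (Subtype.ext ?_) <;> funext i <;> simp }
  rw [cpairs, Nat.card_congr E, Nat.card_prod]
  rfl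

lemma not_isUnit_zmod_iff {p j : ℕ} (hp : p.Prime) (x : ZMod (p ^ (j + 1))) :
    ¬ IsUnit x ↔ p ∣ x.val := by
  haveI : Fact p.Prime := ⟨hp⟩
  haveI : NeZero (p ^ (j + 1)) := ⟨pow_ne_zero _ hp.ne_zero⟩
  have hx : ((x.val : ℕ) : ZMod (p ^ (j + 1))) = x := (ZMod.natCast_val x).trans (ZMod.cast_id _ _)
  rw [← hx, ZMod.isUnit_iff_coprime, Nat.coprime_pow_right_iff (Nat.succ_pos j),
    Nat.coprime_comm, Nat.Prime.coprime_iff_not_dvd hp, not_not, ZMod.val_natCast_of_lt]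
  exact ZMod.val_lt x

lemma isCoprime_zmod_pp_iff {p j : ℕ} (hp : p.Prime) (x y : ZMod (p ^ (j + 1))) :
    IsCoprime x y ↔ IsUnit x ∨ IsUnit y := by
  haveI : NeZero (p ^ (j + 1)) := ⟨pow_ne_zero _ hp.ne_zero⟩
  constructor
  · intro h
    by_contra hc
    push_neg at hc
    rw [not_isUnit_zmod_iff hp, not_isUnit_zmod_iff hp] at hc
    obtain ⟨a, b, hab⟩ := h
    have hdvd : p ∣ p ^ (j + 1) := dvd_pow_self p (Nat.succ_ne_zero j)
    have h1 : (1 : ZMod (p ^ (j + 1))).val = 1 :=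
      ZMod.val_one_eq_one_mod _ ▸ Nat.mod_eq_of_lt (Nat.one_lt_pow (Nat.succ_ne_zero j) hp.one_lt)
    have := congrArg ZMod.val hab
    rw [ZMod.val_add, ZMod.val_mul, ZMod.val_mul, h1] at this
    have hpd : p ∣ 1 := by
      rw [← this]
      exact Nat.dvd_mod_iff hdvd |>.mpr
        (Nat.dvd_add (Nat.dvd_mod_iff hdvd |>.mpr (hc.1.mul_left _))
          (Nat.dvd_mod_iff hdvd |>.mpr (hc.2.mul_left _)))
    exact hp.one_lt.ne' (Nat.dvd_one.mp hpd)
  · rintro (h | h)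
    · exact isUnit_isCoprime_left h _
    · exact (isUnit_isCoprime_left h _).symm

lemma card_nonunits {p j : ℕ} (hp : p.Prime) :
    Nat.card {x : ZMod (p ^ (j + 1)) // ¬ IsUnit x} = p ^ j := by
  haveI : Fact p.Prime := ⟨hp⟩
  haveI : NeZero (p ^ (j + 1)) := ⟨pow_ne_zero _ hp.ne_zero⟩
  classical
  have hcardU : Fintype.card {x : ZMod (p ^ (j + 1)) // IsUnit x} = Nat.totient (p ^ (j + 1)) := by
    rw [← ZMod.card_units_eq_totient]
    exact Fintype.card_congr
      { toFun := fun x => x.2.unit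
        invFun := fun u => ⟨u, u.isUnit⟩
        left_inv := fun x => Subtype.ext x.2.unit_spec
        right_inv := fun u => Units.ext (IsUnit.unit_spec _) }
  rw [Nat.card_eq_fintype_card, Fintype.card_subtype_compl, ZMod.card, hcardU,
    Nat.totient_prime_pow hp (Nat.succ_pos j)]
  have h1 : 1 ≤ p := hp.one_le
  have hpow : p ^ (j + 1) = p ^ j * p := by ring
  rw [hpow, Nat.succ_sub_one]
  apply Nat.sub_eq_of_eq_add
  calc p ^ j * p = p ^ j * ((p - 1) + 1) := by rw [Nat.sub_add_cancel h1]
    _ = p ^ j + p ^ j * (p - 1) := by ring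

lemma cpairs_prime_pow {p j : ℕ} (hp : p.Prime) :
    cpairs (p ^ (j + 1)) + (p ^ j) ^ 2 = (p ^ (j + 1)) ^ 2 := by
  haveI : NeZero (p ^ (j + 1)) := ⟨pow_ne_zero _ hp.ne_zero⟩
  set s : Set (Fin 2 → ZMod (p ^ (j + 1))) := {v | ¬ IsUnit (v 0) ∧ ¬ IsUnit (v 1)} with hs_def
  have hsc : {v : Fin 2 → ZMod (p ^ (j + 1)) | IsCoprime (v 0) (v 1)} = sᶜ := by
    ext v
    simp only [Set.mem_setOf_eq, Set.mem_compl_iff, hs_def, isCoprime_zmod_pp_iff hp,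
      not_and_or, not_not]
  have hs : s.ncard = (p ^ j) ^ 2 := by
    have E : s ≃ {x : ZMod (p ^ (j + 1)) // ¬ IsUnit x} × {x : ZMod (p ^ (j + 1)) // ¬ IsUnit x} :=
      { toFun := fun v => (⟨v.1 0, v.2.1⟩, ⟨v.1 1, v.2.2⟩)
        invFun := fun w => ⟨![w.1.1, w.2.1], ⟨by simp [w.1.2], by simp [w.2.2]⟩⟩
        left_inv := fun v => Subtype.ext (by funext i; fin_cases i <;> simp)
        right_inv := fun w => by refine Prod.ext (Subtype.ext ?_) (Subtype.ext ?_) <;> simp }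
    rw [← Nat.card_coe_set_eq, Nat.card_congr E, Nat.card_prod, card_nonunits hp]
    ring
  have htot : s.ncard + sᶜ.ncard = Nat.card (Fin 2 → ZMod (p ^ (j + 1))) :=
    Set.ncard_add_ncard_compl s
  have hcard : Nat.card (Fin 2 → ZMod (p ^ (j + 1))) = (p ^ (j + 1)) ^ 2 := by
    rw [Nat.card_eq_fintype_card, Fintype.card_fun, ZMod.card]
    simp
  have hcp : cpairs (p ^ (j + 1)) = sᶜ.ncard := by
    rw [cpairs, Nat.card_coe_set_eq, hsc]
  omega

lemma cpairs_formula : ∀ n : ℕ, n ≠ 0 →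
    (cpairs n : ℚ) = (Nat.totient n : ℚ) * n * ∏ p ∈ n.primeFactors, (1 + 1 / (p : ℚ)) := by
  intro n
  induction n using Nat.recOnPosPrimePosCoprime with
  | prime_pow p k pp hk =>
    intro _
    obtain ⟨j, rfl⟩ : ∃ j, k = j + 1 := ⟨k - 1, (Nat.succ_pred_eq_of_pos hk).symm⟩
    have hcp := cpairs_prime_pow (j := j) pp
    have hcpq : (cpairs (p ^ (j + 1)) : ℚ) + ((p : ℚ) ^ j) ^ 2 = ((p : ℚ) ^ (j + 1)) ^ 2 := by
      exact_mod_cast congrArg (Nat.cast : ℕ → ℚ) hcp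
    have hφ : ((p ^ (j + 1)).totient : ℚ) = (p : ℚ) ^ j * ((p : ℚ) - 1) := by
      rw [Nat.totient_prime_pow pp (Nat.succ_pos j), Nat.succ_sub_one]
      push_cast [Nat.cast_sub pp.one_le]
      ring
    rw [Nat.primeFactors_prime_pow (Nat.succ_ne_zero j) pp, Finset.prod_singleton, hφ]
    have hp0 : (p : ℚ) ≠ 0 := Nat.cast_ne_zero.mpr pp.ne_zero
    have : (cpairs (p ^ (j + 1)) : ℚ) = ((p : ℚ) ^ (j + 1)) ^ 2 - ((p : ℚ) ^ j) ^ 2 := by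
      linarith
    rw [this]
    push_cast
    field_simp
    ring
  | zero => intro h; exact absurd rfl h
  | one => intro _; simp [cpairs_one]
  | coprime a b ha hb hab iha ihb =>
    intro _
    have ha0 : a ≠ 0 := by omega
    have hb0 : b ≠ 0 := by omega
    rw [cpairs_mul hab, Nat.totient_mul hab, Nat.Coprime.primeFactors_mul hab,
      Finset.prod_union hab.disjoint_primeFactors]
    push_cast
    rw [iha ha0, ihb hb0]
    ring

end Gamma0IndexAux

open CongruenceSubgroup

theorem gamma0_index_formula (N : ℕ) (hN : 0 < N) :
    ((Gamma0 N).index : ℚ) = N * ∏ p ∈ N.primeFactors, (1 + 1 / (p : ℚ)) := by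
  open Gamma0IndexAux in
  have hN0 : N ≠ 0 := hN.ne'
  have h1 : (Gamma1 N).index = Gamma0IndexAux.cpairs N := by
    rw [← Gamma0IndexAux.stabilizer_v₀ N, MulAction.index_stabilizer,
      Gamma0IndexAux.orbit_v₀ hN0, ← Nat.card_coe_set_eq]
    rfl
  have h2 : (Gamma1 N).relIndex (Gamma0 N) * (Gamma0 N).index = (Gamma1 N).index :=
    Subgroup.relIndex_mul_index (Gamma1_in_Gamma0 N)
  rw [Gamma0IndexAux.relindex_Gamma1_Gamma0 hN0, h1] at h2
  have hφq : (Nat.totient N : ℚ) ≠ 0 := by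
    have := Nat.totient_pos.mpr hN
    exact_mod_cast this.ne'
  have h3 : (Nat.totient N : ℚ) * ((Gamma0 N).index : ℚ) = (Gamma0IndexAux.cpairs N : ℚ) := by
    exact_mod_cast congrArg (Nat.cast : ℕ → ℚ) h2
  rw [Gamma0IndexAux.cpairs_formula N hN0] at h3
  exact mul_left_cancel₀ hφq (h3.trans (mul_assoc _ _ _))
end
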